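/- Let E be a real inner product space, Ω ⊆ E an open convex set, and φ : Ω → ℝ a differentiable convex function with gradient ∇φ. Let Z be an Ω-valued random variable on a probability space such that Z, φ(Z) are integrable and μ := E[Z] ∈ Ω. Then for every a ∈ Ω, E[D_φ(Z, a)] = E[D_φ(Z, μ)] + D_φ(μ, a); that is, the excess expected Bregman loss of any action a over the action μ equals the Bregman divergence from the mean μ to a. -/

import Mathlib

open MeasureTheory
open scoped RealInnerProductSpace

/-- The Bregman divergence of `φ` with gradient field `g`:
`D_φ(x, y) = φ x − φ y − ⟪∇φ(y), x − y⟫`. -/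
noncomputable def bregman {E : Type*} [NormedAddCommGroup E] [InnerProductSpace ℝ E]
    (φ : E → ℝ) (g : E → E) (x y : E) : ℝ :=
  φ x - φ y - ⟪g y, x - y⟫

/-- The excess expected Bregman loss of any action `a` over the mean `μ = E[Z]`
equals the Bregman divergence from `μ` to `a`. -/
theorem expected_bregman_loss_decomposition
    {E : Type*} [NormedAddCommGroup E] [InnerProductSpace ℝ E] [CompleteSpace E]
    (Ω : Set E) (hΩo : IsOpen Ω) (hΩc : Convex ℝ Ω)
    (φ : E → ℝ) (g : E → E)
    (hφ : ConvexOn ℝ Ω φ)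
    (hg : ∀ y ∈ Ω, HasGradientAt φ (g y) y)
    {α : Type*} [MeasurableSpace α] (P : Measure α) [IsProbabilityMeasure P]
    (Z : α → E) (hZΩ : ∀ ω, Z ω ∈ Ω)
    (hZ : Integrable Z P) (hφZ : Integrable (fun ω => φ (Z ω)) P)
    (μ : E) (hμ : μ = ∫ ω, Z ω ∂P) (hμΩ : μ ∈ Ω)
    (a : E) (ha : a ∈ Ω) :
    ∫ ω, bregman φ g (Z ω) a ∂P
      = (∫ ω, bregman φ g (Z ω) μ ∂P) + bregman φ g μ a := by
  have hint : ∀ y : E, Integrable (fun ω => Z ω - y) P := fun y => hZ.sub (integrable_const y)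
  have key : ∀ c y : E, ∫ ω, ⟪c, Z ω - y⟫ ∂P = ⟪c, μ - y⟫ := by
    intro c y
    rw [integral_inner (hint y) c,
      integral_sub hZ (integrable_const y), integral_const, probReal_univ,
      one_smul, ← hμ]
  have hinner : ∀ c y : E, Integrable (fun ω => ⟪c, Z ω - y⟫) P := fun c y =>
    (hint y).const_inner c
  have hbreg : ∀ y : E, Integrable (fun ω => bregman φ g (Z ω) y) P := by
    intro y
    simpa [bregman, sub_sub, Pi.sub_def, Pi.add_def] using
      hφZ.sub ((integrable_const (φ y)).add (hinner (g y) y))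
  have h1 : ∀ x : E, bregman φ g x a =
      bregman φ g x μ + (φ μ - φ a + (⟪g μ, x - μ⟫ - ⟪g a, x - a⟫)) := by
    intro x; simp only [bregman]; ring
  calc ∫ ω, bregman φ g (Z ω) a ∂P
      = ∫ ω, (bregman φ g (Z ω) μ
          + (φ μ - φ a + (⟪g μ, Z ω - μ⟫ - ⟪g a, Z ω - a⟫))) ∂P := by
        simp only [← h1]
    _ = (∫ ω, bregman φ g (Z ω) μ ∂P)
          + ((φ μ - φ a) + ((∫ ω, ⟪g μ, Z ω - μ⟫ ∂P) - ∫ ω, ⟪g a, Z ω - a⟫ ∂P)) := by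
        have hA : Integrable (fun ω => ⟪g μ, Z ω - μ⟫ - ⟪g a, Z ω - a⟫) P :=
          (hinner (g μ) μ).sub (hinner (g a) a)
        have hB : Integrable
            (fun ω => φ μ - φ a + (⟪g μ, Z ω - μ⟫ - ⟪g a, Z ω - a⟫)) P :=
          (integrable_const _).add hA
        rw [integral_add (hbreg μ) hB,
          integral_add (integrable_const _) hA,
          integral_sub (hinner (g μ) μ) (hinner (g a) a), integral_const, probReal_univ,
          smul_eq_mul, one_mul]
    _ = (∫ ω, bregman φ g (Z ω) μ ∂P) + bregman φ g μ a := by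
        rw [key (g μ) μ, key (g a) a]
        simp [bregman]
        ring
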